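/- (Mattarei's Lemma) Let G be a finite group containing no nontrivial solvable normal subgroup. Then there exist non-abelian simple groups T_1, …, T_r and positive integers n_1, …, n_r such that G contains a subgroup isomorphic to T_1^{n_1} × ⋯ × T_r^{n_r} and G is isomorphic to a subgroup of Aut(T_1^{n_1} × ⋯ × T_r^{n_r}). -/

import Mathlib

section MattareiAux

open Subgroup

variable {G : Type*} [Group G] [Finite G]

/-- Conjugate of a subgroup. -/
private def cnj (g : G) (U : Subgroup G) : Subgroup G :=
  U.map (MulAut.conj g).toMonoidHom

private lemma mem_cnj {g x : G} {U : Subgroup G} : x ∈ cnj g U ↔ g⁻¹ * x * g ∈ U := by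
  constructor
  · rintro ⟨u, hu, rfl⟩
    have h1 : (MulAut.conj g).toMonoidHom u = g * u * g⁻¹ := rfl
    rw [h1]
    have h2 : g⁻¹ * (g * u * g⁻¹) * g = u := by group
    rwa [h2]
  · intro hx
    refine ⟨g⁻¹ * x * g, hx, ?_⟩
    show g * (g⁻¹ * x * g) * g⁻¹ = x
    group

private lemma cnj_cnj (g₁ g₂ : G) (U : Subgroup G) : cnj g₁ (cnj g₂ U) = cnj (g₁ * g₂) U := by
  ext x
  simp only [mem_cnj]
  constructor <;> intro hx
  · have : g₂⁻¹ * (g₁⁻¹ * x * g₁) * g₂ = (g₁ * g₂)⁻¹ * x * (g₁ * g₂) := by group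
    rwa [this] at hx
  · have : g₂⁻¹ * (g₁⁻¹ * x * g₁) * g₂ = (g₁ * g₂)⁻¹ * x * (g₁ * g₂) := by group
    rwa [this]

private lemma cnj_one (U : Subgroup G) : cnj (1 : G) U = U := by
  ext x; simp [mem_cnj]

private lemma cnj_bot (g : G) : cnj g (⊥ : Subgroup G) = ⊥ := by
  simp [cnj]

private lemma cnj_ne_bot {g : G} {U : Subgroup G} (hU : U ≠ ⊥) : cnj g U ≠ ⊥ := by
  intro hbot
  apply hU
  have := congrArg (cnj g⁻¹) hbot
  rwa [cnj_cnj, inv_mul_cancel, cnj_one, cnj_bot] at this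

private lemma cnj_mono {g : G} {U V : Subgroup G} (h : U ≤ V) : cnj g U ≤ cnj g V :=
  Subgroup.map_mono h

/-- `T` is a normal subgroup of `A` (phrased inside `G`). -/
private def NIn (A T : Subgroup G) : Prop :=
  T ≤ A ∧ ∀ a ∈ A, ∀ t ∈ T, a * t * a⁻¹ ∈ T

/-- `T` is a minimal normal subgroup of `A`. -/
private def MinN (A T : Subgroup G) : Prop :=
  NIn A T ∧ T ≠ ⊥ ∧ ∀ U : Subgroup G, NIn A U → U ≠ ⊥ → U ≤ T → U = T

private lemma exists_minimal_mem (S : Set (Subgroup G)) (hS : S.Nonempty) :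
    ∃ B ∈ S, ∀ U ∈ S, U ≤ B → U = B := by
  obtain ⟨B, hB, hmin⟩ := (wellFounded_lt (α := Subgroup G)).has_min S hS
  exact ⟨B, hB, fun U hU hle => by
    by_contra hne
    exact hmin U hU (lt_of_le_of_ne hle hne)⟩

private lemma exists_minN (A : Subgroup G) (hA : A ≠ ⊥) : ∃ T, MinN A T := by
  have hmem : A ∈ {U : Subgroup G | NIn A U ∧ U ≠ ⊥} :=
    ⟨⟨le_rfl, fun a ha t ht => A.mul_mem (A.mul_mem ha ht) (A.inv_mem ha)⟩, hA⟩
  obtain ⟨T, hT, hmin⟩ := exists_minimal_mem {U : Subgroup G | NIn A U ∧ U ≠ ⊥} ⟨A, hmem⟩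
  exact ⟨T, hT.1, hT.2, fun U h1 h2 h3 => hmin U ⟨h1, h2⟩ h3⟩

private lemma nIn_cnj {A U : Subgroup G} (hAn : A.Normal) (g : G) (h : NIn A U) :
    NIn A (cnj g U) := by
  constructor
  · intro x hx
    rw [mem_cnj] at hx
    have := hAn.conj_mem _ (h.1 hx) g
    have e : g * (g⁻¹ * x * g) * g⁻¹ = x := by group
    rwa [e] at this
  · intro a ha t ht
    rw [mem_cnj] at ht ⊢
    have ha' : g⁻¹ * a * g ∈ A := by
      have := hAn.conj_mem _ ha g⁻¹
      rwa [inv_inv] at this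
    have := h.2 _ ha' _ ht
    have e : (g⁻¹ * a * g) * (g⁻¹ * t * g) * (g⁻¹ * a * g)⁻¹ = g⁻¹ * (a * t * a⁻¹) * g := by
      group
    rwa [e] at this

private lemma minN_cnj {A T : Subgroup G} (hAn : A.Normal) (g : G) (h : MinN A T) :
    MinN A (cnj g T) := by
  refine ⟨nIn_cnj hAn g h.1, cnj_ne_bot h.2.1, fun U hU hUne hUle => ?_⟩
  have h1 : cnj g⁻¹ U ≤ cnj g⁻¹ (cnj g T) := cnj_mono hUle
  rw [cnj_cnj, inv_mul_cancel, cnj_one] at h1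
  have h2 := h.2.2 (cnj g⁻¹ U) (nIn_cnj hAn g⁻¹ hU) (cnj_ne_bot hUne) h1
  have := congrArg (cnj g) h2
  rwa [cnj_cnj, mul_inv_cancel, cnj_one] at this

private lemma cnj_eq_self {A U : Subgroup G} {a : G} (ha : a ∈ A) (h : NIn A U) :
    cnj a U = U := by
  apply le_antisymm
  · intro x hx
    rw [mem_cnj] at hx
    have := h.2 a ha _ hx
    have e : a * (a⁻¹ * x * a) * a⁻¹ = x := by group
    rwa [e] at this
  · intro u hu
    rw [mem_cnj]
    have := h.2 a⁻¹ (A.inv_mem ha) u hu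
    rwa [inv_inv] at this

private lemma nIn_iSup {k : ℕ} {A : Subgroup G} (K : Fin k → Subgroup G)
    (h : ∀ i, NIn A (K i)) : NIn A (⨆ i, K i) := by
  constructor
  · exact iSup_le fun i => (h i).1
  · intro a ha t ht
    have hle : cnj a (⨆ i, K i) ≤ ⨆ i, K i := by
      rw [show cnj a (⨆ i, K i) = (⨆ i, K i).map (MulAut.conj a).toMonoidHom from rfl,
        Subgroup.map_iSup]
      exact iSup_mono fun i => le_of_eq (cnj_eq_self ha (h i))
    apply hle
    rw [mem_cnj]
    have e : a⁻¹ * (a * t * a⁻¹) * a = t := by group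
    rwa [e]

private lemma commute_iSup_iSup {ι₁ ι₂ : Sort*} {K₁ : ι₁ → Subgroup G} {K₂ : ι₂ → Subgroup G}
    (hcross : ∀ i j, ∀ x y : G, x ∈ K₁ i → y ∈ K₂ j → Commute x y) :
    ∀ x ∈ (⨆ i, K₁ i), ∀ y ∈ (⨆ j, K₂ j), Commute x y := by
  have h1 : ∀ i, (⨆ j, K₂ j) ≤ Subgroup.centralizer (K₁ i) :=
    fun i => iSup_le fun j y hy => Subgroup.mem_centralizer_iff.mpr
      fun x hx => (hcross i j x y hx hy).eq
  have h2 : (⨆ i, K₁ i) ≤ Subgroup.centralizer ((⨆ j, K₂ j) : Subgroup G) :=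
    iSup_le fun i x hx => Subgroup.mem_centralizer_iff.mpr
      fun y hy => (Subgroup.mem_centralizer_iff.mp (h1 i hy) x hx).symm
  intro x hx y hy
  exact Commute.symm (Subgroup.mem_centralizer_iff.mp (h2 hx) y hy)

private lemma mem_sup_of_commute {X Y : Subgroup G}
    (hc : ∀ x ∈ X, ∀ y ∈ Y, Commute x y) {g : G} (hg : g ∈ X ⊔ Y) :
    ∃ x ∈ X, ∃ y ∈ Y, g = x * y := by
  let P : Subgroup G :=
    { carrier := {g | ∃ x ∈ X, ∃ y ∈ Y, g = x * y}
      one_mem' := ⟨1, X.one_mem, 1, Y.one_mem, (one_mul 1).symm⟩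
      mul_mem' := by
        rintro a b ⟨x, hx, y, hy, rfl⟩ ⟨x', hx', y', hy', rfl⟩
        refine ⟨x * x', X.mul_mem hx hx', y * y', Y.mul_mem hy hy', ?_⟩
        have h := (hc x' hx' y hy).eq
        calc (x * y) * (x' * y') = x * (y * x') * y' := by group
          _ = x * (x' * y) * y' := by rw [← h]
          _ = (x * x') * (y * y') := by group
      inv_mem' := by
        rintro a ⟨x, hx, y, hy, rfl⟩
        refine ⟨x⁻¹, X.inv_mem hx, y⁻¹, Y.inv_mem hy, ?_⟩
        have h := ((hc x hx y hy).inv_inv).eq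
        rw [mul_inv_rev, h] }
  have hXP : X ≤ P := fun x hx => ⟨x, hx, 1, Y.one_mem, (mul_one x).symm⟩
  have hYP : Y ≤ P := fun y hy => ⟨1, X.one_mem, y, hy, (one_mul y).symm⟩
  exact sup_le hXP hYP hg

private lemma combine {ι₁ ι₂ : Type} {K₁ : ι₁ → Subgroup G} {K₂ : ι₂ → Subgroup G}
    (hc₁ : Pairwise fun i j => ∀ x y : G, x ∈ K₁ i → y ∈ K₁ j → Commute x y)
    (hc₂ : Pairwise fun i j => ∀ x y : G, x ∈ K₂ i → y ∈ K₂ j → Commute x y)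
    (hind₁ : iSupIndep K₁) (hind₂ : iSupIndep K₂)
    (hcross : ∀ i j, ∀ x y : G, x ∈ K₁ i → y ∈ K₂ j → Commute x y)
    (hdisj : (⨆ i, K₁ i) ⊓ (⨆ j, K₂ j) = ⊥) :
    (Pairwise fun i j : ι₁ ⊕ ι₂ =>
      ∀ x y : G, x ∈ Sum.elim K₁ K₂ i → y ∈ Sum.elim K₁ K₂ j → Commute x y)
    ∧ iSupIndep (Sum.elim K₁ K₂) := by
  constructor
  · rintro (i | i) (j | j) hij
    · exact hc₁ (fun hh => hij (congrArg Sum.inl hh))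
    · exact hcross i j
    · exact fun x y hx hy => (hcross j i y x hy hx).symm
    · exact hc₂ (fun hh => hij (congrArg Sum.inr hh))
  · rintro (i | i)
    · rw [disjoint_iff, eq_bot_iff]
      intro x hx
      rw [Subgroup.mem_inf] at hx
      have hx1 : x ∈ K₁ i := hx.1
      have hle : (⨆ (j) (_ : j ≠ Sum.inl i), Sum.elim K₁ K₂ j) ≤
          (⨆ (j) (_ : j ≠ i), K₁ j) ⊔ (⨆ j, K₂ j) := by
        refine iSup₂_le ?_
        rintro (j | j) hj
        · exact le_sup_of_le_left
            (le_iSup₂ (f := fun (j : ι₁) (_ : j ≠ i) => K₁ j) j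
              (fun hh => hj (congrArg Sum.inl hh)))
        · exact le_sup_of_le_right (le_iSup _ j)
      have hx2 := hle hx.2
      have hXS : ∀ a ∈ (⨆ (j) (_ : j ≠ i), K₁ j), ∀ b ∈ (⨆ j, K₂ j), Commute a b := by
        intro a ha b hb
        have haS : a ∈ ⨆ j, K₁ j := (iSup₂_le fun j _ => le_iSup K₁ j) ha
        exact commute_iSup_iSup hcross a haS b hb
      obtain ⟨a, ha, b, hb, rfl⟩ := mem_sup_of_commute hXS hx2
      have hbS : b ∈ (⨆ j, K₁ j) ⊓ (⨆ j, K₂ j) := by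
        constructor
        · have haS : a ∈ ⨆ j, K₁ j := (iSup₂_le fun j _ => le_iSup K₁ j) ha
          have hxS : a * b ∈ ⨆ j, K₁ j := le_iSup K₁ i hx1
          have : b = a⁻¹ * (a * b) := by group
          rw [this]
          exact Subgroup.mul_mem _ (Subgroup.inv_mem _ haS) hxS
        · exact hb
      rw [hdisj, Subgroup.mem_bot] at hbS
      subst hbS
      have hxa : a * 1 = a := mul_one a
      rw [hxa] at hx1 ⊢
      have := (hind₁ i).le_bot (Subgroup.mem_inf.mpr ⟨hx1, ha⟩)
      exact this
    · rw [disjoint_iff, eq_bot_iff]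
      intro x hx
      rw [Subgroup.mem_inf] at hx
      have hx1 : x ∈ K₂ i := hx.1
      have hle : (⨆ (j) (_ : j ≠ Sum.inr i), Sum.elim K₁ K₂ j) ≤
          (⨆ j, K₁ j) ⊔ (⨆ (j) (_ : j ≠ i), K₂ j) := by
        refine iSup₂_le ?_
        rintro (j | j) hj
        · exact le_sup_of_le_left (le_iSup _ j)
        · exact le_sup_of_le_right
            (le_iSup₂ (f := fun (j : ι₂) (_ : j ≠ i) => K₂ j) j
              (fun hh => hj (congrArg Sum.inr hh)))
      have hx2 := hle hx.2
      have hXS : ∀ a ∈ (⨆ j, K₁ j), ∀ b ∈ (⨆ (j) (_ : j ≠ i), K₂ j), Commute a b := by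
        intro a ha b hb
        have hbS : b ∈ ⨆ j, K₂ j := (iSup₂_le fun j _ => le_iSup K₂ j) hb
        exact commute_iSup_iSup hcross a ha b hbS
      obtain ⟨a, ha, b, hb, rfl⟩ := mem_sup_of_commute hXS hx2
      have haS : a ∈ (⨆ j, K₁ j) ⊓ (⨆ j, K₂ j) := by
        constructor
        · exact ha
        · have hbS : b ∈ ⨆ j, K₂ j := (iSup₂_le fun j _ => le_iSup K₂ j) hb
          have hxS : a * b ∈ ⨆ j, K₂ j := le_iSup K₂ i hx1
          have : a = (a * b) * b⁻¹ := by group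
          rw [this]
          exact Subgroup.mul_mem _ hxS (Subgroup.inv_mem _ hbS)
      rw [hdisj, Subgroup.mem_bot] at haS
      subst haS
      have hxb : 1 * b = b := one_mul b
      rw [hxb] at hx1 ⊢
      exact (hind₂ i).le_bot (Subgroup.mem_inf.mpr ⟨hx1, hb⟩)

end MattareiAux

section MattareiMain

open Subgroup
open scoped commutatorElement

variable {G : Type*} [Group G] [Finite G]

/-- Decomposition of a minimal normal non-solvable subgroup into nonabelian simple factors. -/
private lemma decomp (A : Subgroup G) (hAn : A.Normal) (hAbot : A ≠ ⊥)
    (hminA : ∀ U : Subgroup G, U.Normal → U ≠ ⊥ → U ≤ A → U = A)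
    (hns : ¬ IsSolvable A) :
    ∃ (m : ℕ) (T : Fin m → Subgroup G),
      (∀ i, IsSimpleGroup (T i)) ∧ (∀ i, ∃ a b : T i, a * b ≠ b * a) ∧
      (Pairwise fun i j => ∀ x y : G, x ∈ T i → y ∈ T j → Commute x y) ∧
      iSupIndep T ∧ (⨆ i, T i) = A := by
  obtain ⟨T₀, hT₀⟩ := exists_minN A hAbot
  set 𝒟 : Set (Subgroup G) := {D | ∃ (k : ℕ) (c : Fin k → G),
    (Pairwise fun i j => ∀ x y : G, x ∈ cnj (c i) T₀ → y ∈ cnj (c j) T₀ → Commute x y) ∧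
    iSupIndep (fun i => cnj (c i) T₀) ∧ D = ⨆ i, cnj (c i) T₀} with h𝒟
  have hbot𝒟 : (⊥ : Subgroup G) ∈ 𝒟 := by
    refine ⟨0, Fin.elim0, ?_, ?_, ?_⟩
    · intro i; exact i.elim0
    · intro i; exact i.elim0
    · exact (iSup_of_empty _).symm
  obtain ⟨D, hD𝒟, hDmax⟩ := (wellFounded_gt (α := Subgroup G)).has_min 𝒟 ⟨⊥, hbot𝒟⟩
  obtain ⟨k, c, hcomm, hind, hDeq⟩ := hD𝒟
  have hKmin : ∀ i, MinN A (cnj (c i) T₀) := fun i => minN_cnj hAn (c i) hT₀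
  have hKA : ∀ i, cnj (c i) T₀ ≤ A := fun i => (hKmin i).1.1
  have hDNIn : NIn A D := by
    rw [hDeq]; exact nIn_iSup _ (fun i => (hKmin i).1)
  have hDleA : D ≤ A := hDNIn.1
  -- every conjugate of T₀ lies in D
  have hall : ∀ g : G, cnj g T₀ ≤ D := by
    by_contra hcon
    push_neg at hcon
    obtain ⟨g, hgD⟩ := hcon
    have hUmin : MinN A (cnj g T₀) := minN_cnj hAn g hT₀
    have hUD : cnj g T₀ ⊓ D = ⊥ := by
      by_contra hne
      have hNInUD : NIn A (cnj g T₀ ⊓ D) :=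
        ⟨inf_le_left.trans hUmin.1.1, fun a ha t ht => by
          rw [Subgroup.mem_inf] at ht ⊢
          exact ⟨hUmin.1.2 a ha t ht.1, hDNIn.2 a ha t ht.2⟩⟩
      have heq := hUmin.2.2 _ hNInUD hne inf_le_left
      exact hgD (inf_eq_left.mp heq)
    have hcommUD : ∀ x ∈ cnj g T₀, ∀ d ∈ D, Commute x d := by
      intro x hx d hd
      rw [← commutatorElement_eq_one_iff_commute]
      have h1 : ⁅x, d⁆ ∈ D := by
        have h2 : x * d * x⁻¹ ∈ D := hDNIn.2 x (hUmin.1.1 hx) d hd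
        have e : ⁅x, d⁆ = (x * d * x⁻¹) * d⁻¹ := by rw [commutatorElement_def]
        rw [e]
        exact D.mul_mem h2 (D.inv_mem hd)
      have h2 : ⁅x, d⁆ ∈ cnj g T₀ := by
        have h3 : d * x⁻¹ * d⁻¹ ∈ cnj g T₀ :=
          hUmin.1.2 d (hDleA hd) x⁻¹ ((cnj g T₀).inv_mem hx)
        have e : ⁅x, d⁆ = x * (d * x⁻¹ * d⁻¹) := by rw [commutatorElement_def]; group
        rw [e]
        exact (cnj g T₀).mul_mem hx h3
      have h4 : ⁅x, d⁆ ∈ cnj g T₀ ⊓ D := Subgroup.mem_inf.mpr ⟨h2, h1⟩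
      rwa [hUD, Subgroup.mem_bot] at h4
    -- append `cnj g T₀` to the family
    have hc₂ : Pairwise fun i j : Fin 1 => ∀ x y : G,
        x ∈ (fun _ : Fin 1 => cnj g T₀) i → y ∈ (fun _ : Fin 1 => cnj g T₀) j → Commute x y := by
      intro i j hij
      exact absurd (Subsingleton.elim i j) hij
    have hind₂ : iSupIndep (fun _ : Fin 1 => cnj g T₀) := by
      intro i
      have h0 : (⨆ (j : Fin 1) (_ : j ≠ i), (fun _ : Fin 1 => cnj g T₀) j) = ⊥ :=
        le_bot_iff.mp (iSup₂_le fun j hj => absurd (Subsingleton.elim j i) hj)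
      rw [h0]
      exact disjoint_bot_right
    have hcross : ∀ (i : Fin k) (j : Fin 1), ∀ x y : G,
        x ∈ cnj (c i) T₀ → y ∈ cnj g T₀ → Commute x y := by
      intro i j x y hx hy
      exact (hcommUD y hy x (hDeq ▸ le_iSup (fun i => cnj (c i) T₀) i hx)).symm
    have hdisj2 : (⨆ i, cnj (c i) T₀) ⊓ (⨆ _ : Fin 1, cnj g T₀) = ⊥ := by
      rw [iSup_const, ← hDeq, inf_comm]
      exact hUD
    obtain ⟨hp', hi'⟩ := combine hcomm hc₂ hind hind₂ hcross hdisj2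
    have hfam : (fun n : Fin (k+1) =>
          cnj (Sum.elim c (fun _ : Fin 1 => g) (finSumFinEquiv.symm n)) T₀)
        = (Sum.elim (fun i => cnj (c i) T₀) (fun _ : Fin 1 => cnj g T₀)) ∘ finSumFinEquiv.symm := by
      funext n
      rcases hsn : finSumFinEquiv.symm n with s | s <;>
        simp only [Function.comp_apply, hsn, Sum.elim_inl, Sum.elim_inr]
    have hD' : D ⊔ cnj g T₀ ∈ 𝒟 := by
      refine ⟨k+1, fun n => Sum.elim c (fun _ : Fin 1 => g) (finSumFinEquiv.symm n), ?_, ?_, ?_⟩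
      · intro i j hij x y hx hy
        rw [congrFun hfam i] at hx
        rw [congrFun hfam j] at hy
        exact hp' (finSumFinEquiv.symm.injective.ne hij) x y hx hy
      · rw [hfam]
        exact hi'.comp finSumFinEquiv.symm.injective
      · rw [hfam]
        rw [show (⨆ n, ((Sum.elim (fun i => cnj (c i) T₀) (fun _ : Fin 1 => cnj g T₀))
            ∘ finSumFinEquiv.symm) n) = ⨆ s, Sum.elim (fun i => cnj (c i) T₀)
            (fun _ : Fin 1 => cnj g T₀) s from finSumFinEquiv.symm.iSup_comp, iSup_sum]
        simp only [Sum.elim_inl, Sum.elim_inr]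
        rw [iSup_const, ← hDeq]
    exact hDmax _ hD' (left_lt_sup.mpr hgD)
  have hDnormal : D.Normal := by
    constructor
    intro n hn g
    have h1 : cnj g D ≤ D := by
      nth_rewrite 1 [hDeq]
      rw [show cnj g (⨆ i, cnj (c i) T₀)
          = (⨆ i, cnj (c i) T₀).map (MulAut.conj g).toMonoidHom from rfl, Subgroup.map_iSup]
      refine iSup_le fun i => ?_
      show cnj g (cnj (c i) T₀) ≤ D
      rw [cnj_cnj]
      exact hall _
    apply h1
    rw [mem_cnj]
    have e : g⁻¹ * (g * n * g⁻¹) * g = n := by group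
    rw [e]
    exact hn
  have hDbot : D ≠ ⊥ := by
    intro hbot
    apply hT₀.2.1
    have h1 := hall 1
    rwa [cnj_one, hbot, le_bot_iff] at h1
  have hDA : D = A := hminA D hDnormal hDbot hDleA
  -- T₀ is nonabelian
  have hT₀nab : ∃ a b : T₀, a * b ≠ b * a := by
    by_contra hcon
    push_neg at hcon
    have hKicomm : ∀ i, ∀ x ∈ cnj (c i) T₀, ∀ y ∈ cnj (c i) T₀, Commute x y := by
      intro i x hx y hy
      rw [mem_cnj] at hx hy
      have h1 := hcon ⟨_, hx⟩ ⟨_, hy⟩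
      have h2 : (c i)⁻¹ * x * (c i) * ((c i)⁻¹ * y * (c i))
          = (c i)⁻¹ * y * (c i) * ((c i)⁻¹ * x * (c i)) := congrArg Subtype.val h1
      show x * y = y * x
      have e1 : x * y = (c i) * ((c i)⁻¹ * x * (c i) * ((c i)⁻¹ * y * (c i))) * (c i)⁻¹ := by
        group
      have e2 : y * x = (c i) * ((c i)⁻¹ * y * (c i) * ((c i)⁻¹ * x * (c i))) * (c i)⁻¹ := by
        group
      rw [e1, e2, h2]
    have hcent1 : ∀ i, A ≤ Subgroup.centralizer (cnj (c i) T₀ : Subgroup G) := by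
      intro i
      rw [← hDA, hDeq]
      refine iSup_le fun j y hy => Subgroup.mem_centralizer_iff.mpr fun x hx => ?_
      rcases eq_or_ne j i with rfl | hji
      · exact (hKicomm j x hx y hy).eq
      · exact (hcomm (Ne.symm hji) x y hx hy).eq
    have hcent2 : A ≤ Subgroup.centralizer (A : Set G) := by
      nth_rewrite 1 [← hDA]
      rw [hDeq]
      refine iSup_le fun i x hx => Subgroup.mem_centralizer_iff.mpr fun a ha => ?_
      exact (Subgroup.mem_centralizer_iff.mp (hcent1 i ha) x hx).symm
    have hsolv : IsSolvable A := by
      apply isSolvable_of_comm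
      intro a b
      apply Subtype.ext
      show (↑a : G) * ↑b = ↑b * ↑a
      exact Subgroup.mem_centralizer_iff.mp (hcent2 b.2) ↑a a.2
    exact hns hsolv
  -- each factor is nonabelian
  have hnabK : ∀ i, ∃ a b : (cnj (c i) T₀), a * b ≠ b * a := by
    intro i
    obtain ⟨a, b, hab⟩ := hT₀nab
    have hma : (c i) * ↑a * (c i)⁻¹ ∈ cnj (c i) T₀ := by
      rw [mem_cnj]
      have e : (c i)⁻¹ * ((c i) * ↑a * (c i)⁻¹) * (c i) = (↑a : G) := by group
      rw [e]; exact a.2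
    have hmb : (c i) * ↑b * (c i)⁻¹ ∈ cnj (c i) T₀ := by
      rw [mem_cnj]
      have e : (c i)⁻¹ * ((c i) * ↑b * (c i)⁻¹) * (c i) = (↑b : G) := by group
      rw [e]; exact b.2
    refine ⟨⟨_, hma⟩, ⟨_, hmb⟩, fun hEq => hab ?_⟩
    have h2 : ((c i) * ↑a * (c i)⁻¹) * ((c i) * ↑b * (c i)⁻¹)
        = ((c i) * ↑b * (c i)⁻¹) * ((c i) * ↑a * (c i)⁻¹) := congrArg Subtype.val hEq
    apply Subtype.ext
    show (↑a : G) * ↑b = ↑b * ↑a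
    have e1 : (↑a : G) * ↑b
        = (c i)⁻¹ * (((c i) * ↑a * (c i)⁻¹) * ((c i) * ↑b * (c i)⁻¹)) * (c i) := by group
    have e2 : (↑b : G) * ↑a
        = (c i)⁻¹ * (((c i) * ↑b * (c i)⁻¹) * ((c i) * ↑a * (c i)⁻¹)) * (c i) := by group
    rw [e1, e2, h2]
  -- each factor is simple
  have hsimple : ∀ i, IsSimpleGroup (cnj (c i) T₀) := by
    intro i
    haveI : Nontrivial (cnj (c i) T₀) :=
      (Subgroup.nontrivial_iff_ne_bot _).mpr (hKmin i).2.1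
    constructor
    intro U hU
    have hU'le : U.map (cnj (c i) T₀).subtype ≤ cnj (c i) T₀ := by
      calc U.map (cnj (c i) T₀).subtype
          ≤ (⊤ : Subgroup (cnj (c i) T₀)).map (cnj (c i) T₀).subtype :=
            Subgroup.map_mono le_top
        _ = cnj (c i) T₀ := by rw [← MonoidHom.range_eq_map, Subgroup.range_subtype]
    have hstep : ∀ j, ∀ x ∈ cnj (c j) T₀, ∀ t ∈ U.map (cnj (c i) T₀).subtype,
        x * t * x⁻¹ ∈ U.map (cnj (c i) T₀).subtype := by
      intro j x hx t ht
      rcases eq_or_ne j i with rfl | hji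
      · obtain ⟨u, hu, hut⟩ := ht
        have hconj : (⟨x, hx⟩ : cnj (c j) T₀) * u * (⟨x, hx⟩ : cnj (c j) T₀)⁻¹ ∈ U :=
          hU.conj_mem u hu ⟨x, hx⟩
        refine ⟨_, hconj, ?_⟩
        show x * ((cnj (c j) T₀).subtype u : G) * x⁻¹ = x * t * x⁻¹
        rw [hut]
      · have hcx : Commute x t := hcomm hji x t hx (hU'le ht)
        have e : x * t * x⁻¹ = t := by rw [hcx.eq]; group
        rw [e]; exact ht
    rcases eq_or_ne (U.map (cnj (c i) T₀).subtype) ⊥ with hb | hnb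
    · left
      exact Subgroup.map_injective (cnj (c i) T₀).subtype_injective
        (hb.trans (Subgroup.map_bot _).symm)
    · right
      have hAnorm : A ≤ Subgroup.normalizer ((U.map (cnj (c i) T₀).subtype : Subgroup G) : Set G) := by
        rw [← hDA, hDeq]
        refine iSup_le fun j x hx => ?_
        rw [Subgroup.mem_normalizer_iff]
        intro t
        constructor
        · exact fun ht => hstep j x hx t ht
        · intro ht
          have h1 := hstep j x⁻¹ ((cnj (c j) T₀).inv_mem hx) _ ht
          have e : x⁻¹ * (x * t * x⁻¹) * x⁻¹⁻¹ = t := by group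
          rwa [e] at h1
      have hU'NIn : NIn A (U.map (cnj (c i) T₀).subtype) :=
        ⟨hU'le.trans (hKA i), fun a ha t ht =>
          (Subgroup.mem_normalizer_iff.mp (hAnorm ha) t).mp ht⟩
      have hU'eq := (hKmin i).2.2 _ hU'NIn hnb hU'le
      have h5 : U.map (cnj (c i) T₀).subtype
          = (⊤ : Subgroup (cnj (c i) T₀)).map (cnj (c i) T₀).subtype := by
        rw [hU'eq, ← MonoidHom.range_eq_map, Subgroup.range_subtype]
      exact Subgroup.map_injective (cnj (c i) T₀).subtype_injective h5
  refine ⟨k, fun i => cnj (c i) T₀, hsimple, hnabK, hcomm, hind, ?_⟩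
  rw [← hDeq]
  exact hDA

/-- The socle of a group with no nontrivial solvable normal subgroup. -/
private lemma socle (h : ∀ N : Subgroup G, N.Normal → IsSolvable N → N = ⊥) :
    ∃ (r : ℕ) (K : Fin r → Subgroup G),
      (∀ i, IsSimpleGroup (K i)) ∧ (∀ i, ∃ a b : (K i), a * b ≠ b * a) ∧
      ∃ _ : Pairwise fun i j => ∀ x y : G, x ∈ K i → y ∈ K j → Commute x y,
        iSupIndep K ∧ (⨆ i, K i).Normal ∧
        Subgroup.centralizer ((⨆ i, K i : Subgroup G) : Set G) = ⊥ := by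
  set Good : Set (Subgroup G) := {S | S.Normal ∧ ∃ (k : ℕ) (K : Fin k → Subgroup G),
    (∀ i, IsSimpleGroup (K i)) ∧ (∀ i, ∃ a b : (K i), a * b ≠ b * a) ∧
    (Pairwise fun i j => ∀ x y : G, x ∈ K i → y ∈ K j → Commute x y) ∧
    iSupIndep K ∧ S = ⨆ i, K i} with hGood
  have hbot : (⊥ : Subgroup G) ∈ Good := by
    refine ⟨inferInstance, 0, Fin.elim0, ?_, ?_, ?_, ?_, ?_⟩
    · intro i; exact i.elim0
    · intro i; exact i.elim0
    · intro i j hij; exact i.elim0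
    · intro i; exact i.elim0
    · exact (iSup_of_empty _).symm
  obtain ⟨S, hSGood, hSmax⟩ := (wellFounded_gt (α := Subgroup G)).has_min Good ⟨⊥, hbot⟩
  obtain ⟨hSn, k, K, hsimp, hnab, hcomm, hind, hSeq⟩ := hSGood
  have key : ∀ B : Subgroup G, B.Normal → B ≠ ⊥ → S ⊓ B ≠ ⊥ := by
    intro B hBn hBne hSB
    obtain ⟨B', hB'mem, hB'min⟩ := exists_minimal_mem
      {U : Subgroup G | U.Normal ∧ U ≠ ⊥ ∧ U ≤ B} ⟨B, hBn, hBne, le_rfl⟩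
    have hB'S : S ⊓ B' = ⊥ := by
      apply le_bot_iff.mp
      rw [← hSB]
      exact inf_le_inf_left S hB'mem.2.2
    have hB'ns : ¬ IsSolvable B' := fun hs => hB'mem.2.1 (h B' hB'mem.1 hs)
    obtain ⟨m, T, hTsimp, hTnab, hTcomm, hTind, hTsup⟩ := decomp B' hB'mem.1 hB'mem.2.1
      (fun U h1 h2 h3 => hB'min U ⟨h1, h2, h3.trans hB'mem.2.2⟩ h3) hB'ns
    have hcross : ∀ (i : Fin k) (j : Fin m), ∀ x y : G, x ∈ K i → y ∈ T j → Commute x y := by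
      intro i j x y hx hy
      refine Subgroup.commute_of_normal_of_disjoint S B' hSn hB'mem.1
        (disjoint_iff.mpr hB'S) x y ?_ ?_
      · rw [hSeq]; exact le_iSup K i hx
      · rw [← hTsup]; exact le_iSup T j hy
    have hdisj : (⨆ i, K i) ⊓ (⨆ j, T j) = ⊥ := by rw [← hSeq, hTsup]; exact hB'S
    obtain ⟨hp', hi'⟩ := combine hcomm hTcomm hind hTind hcross hdisj
    have hSnew : S ⊔ B' ∈ Good := by
      haveI := hSn; haveI := hB'mem.1
      refine ⟨inferInstance, k + m, Sum.elim K T ∘ finSumFinEquiv.symm, ?_, ?_, ?_, ?_, ?_⟩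
      · intro n
        rcases hsn : finSumFinEquiv.symm n with s | s
        · have e : (Sum.elim K T ∘ finSumFinEquiv.symm) n = K s := by
            rw [Function.comp_apply, hsn, Sum.elim_inl]
          rw [e]; exact hsimp s
        · have e : (Sum.elim K T ∘ finSumFinEquiv.symm) n = T s := by
            rw [Function.comp_apply, hsn, Sum.elim_inr]
          rw [e]; exact hTsimp s
      · intro n
        rcases hsn : finSumFinEquiv.symm n with s | s
        · have e : (Sum.elim K T ∘ finSumFinEquiv.symm) n = K s := by
            rw [Function.comp_apply, hsn, Sum.elim_inl]
          rw [e]; exact hnab s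
        · have e : (Sum.elim K T ∘ finSumFinEquiv.symm) n = T s := by
            rw [Function.comp_apply, hsn, Sum.elim_inr]
          rw [e]; exact hTnab s
      · intro i j hij x y hx hy
        exact hp' (finSumFinEquiv.symm.injective.ne hij) x y hx hy
      · exact hi'.comp finSumFinEquiv.symm.injective
      · rw [show (⨆ n, (Sum.elim K T ∘ finSumFinEquiv.symm) n) = ⨆ s, Sum.elim K T s from
          finSumFinEquiv.symm.iSup_comp, iSup_sum]
        simp only [Sum.elim_inl, Sum.elim_inr]
        rw [← hSeq, hTsup]
    have hlt : S < S ⊔ B' := left_lt_sup.mpr (fun hle => hB'mem.2.1 (by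
      apply le_bot_iff.mp
      rw [← hB'S]
      exact le_inf hle le_rfl))
    exact hSmax _ hSnew hlt
  have hCb : Subgroup.centralizer (S : Set G) = ⊥ := by
    by_contra hCne
    have hCn : (Subgroup.centralizer (S : Set G)).Normal := by
      constructor
      intro n hn g
      rw [Subgroup.mem_centralizer_iff] at hn ⊢
      intro s hs
      have hs' : g⁻¹ * s * g ∈ S := by
        have h1 := hSn.conj_mem s hs g⁻¹
        rwa [inv_inv] at h1
      have h1 := hn _ hs'
      have e1 : s * (g * n * g⁻¹) = g * ((g⁻¹ * s * g) * n) * g⁻¹ := by group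
      have e2 : g * (n * (g⁻¹ * s * g)) * g⁻¹ = (g * n * g⁻¹) * s := by group
      rw [e1, h1, e2]
    have hsolv : IsSolvable (S ⊓ Subgroup.centralizer (S : Set G) : Subgroup G) := by
      apply isSolvable_of_comm
      intro a b
      apply Subtype.ext
      show (↑a : G) * ↑b = ↑b * ↑a
      exact Subgroup.mem_centralizer_iff.mp (Subgroup.mem_inf.mp b.2).2 ↑a
        (Subgroup.mem_inf.mp a.2).1
    haveI := hSn
    haveI := hCn
    have hinf : (S ⊓ Subgroup.centralizer (S : Set G)).Normal := inferInstance
    exact key _ hCn hCne (h _ hinf hsolv)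
  refine ⟨k, K, hsimp, hnab, hcomm, hind, ?_, ?_⟩
  · rw [← hSeq]; exact hSn
  · rw [← hSeq]; exact hCb

end MattareiMain

/-- A copy of `Fin n` carrying no pre-existing algebraic instances. -/
private def MattareiWrap (n : ℕ) : Type := Fin n

private instance (n : ℕ) : Finite (MattareiWrap n) := inferInstanceAs (Finite (Fin n))

/-- Mattarei's Lemma: a finite group with no nontrivial solvable normal subgroup contains a
copy of a direct product `T₁^{n₁} × ⋯ × T_r^{n_r}` of non-abelian simple groups, and embeds
into the automorphism group of this product. -/
theorem mattarei {G : Type*} [Group G] [Finite G]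
    (h : ∀ N : Subgroup G, N.Normal → IsSolvable N → N = ⊥) :
    ∃ (r : ℕ) (T : Fin r → Type) (instT : ∀ i, Group (T i)) (n : Fin r → ℕ),
      (∀ i, Finite (T i)) ∧
      (∀ i, 1 ≤ n i) ∧
      (∀ i, IsSimpleGroup (T i)) ∧
      (∀ i, ∃ a b : T i, a * b ≠ b * a) ∧
      (∃ f : (∀ i, Fin (n i) → T i) →* G, Function.Injective f) ∧
      (∃ f : G →* MulAut (∀ i, Fin (n i) → T i), Function.Injective f) := by
  obtain ⟨r, K, hsimp, hnab, hcomm, hind, hSn, hC⟩ := socle h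
  haveI : (⨆ i, K i).Normal := hSn
  let e : ∀ i, MattareiWrap (Nat.card (K i)) ≃ (K i) := fun i => (Finite.equivFin (K i)).symm
  let instT : ∀ i, Group (MattareiWrap (Nat.card (K i))) := fun i => (e i).group
  let me : ∀ i, MattareiWrap (Nat.card (K i)) ≃* (K i) := fun i =>
    { toEquiv := e i
      map_mul' := fun x y => (e i).apply_symm_apply _ }
  refine ⟨r, fun i => MattareiWrap (Nat.card (K i)), instT, fun _ => 1, ?_, ?_, ?_, ?_, ?_, ?_⟩
  · intro i
    exact inferInstance
  · intro i
    exact le_rfl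
  · intro i
    haveI := hsimp i
    haveI : Nontrivial (MattareiWrap (Nat.card (K i))) := (e i).nontrivial
    exact IsSimpleGroup.isSimpleGroup_of_surjective (me i).symm.toMonoidHom
      (me i).symm.surjective
  · intro i
    obtain ⟨a, b, hab⟩ := hnab i
    refine ⟨(me i).symm a, (me i).symm b, fun hEq => hab ?_⟩
    rw [← map_mul, ← map_mul] at hEq
    exact (me i).symm.injective hEq
  · -- the embedding of the product into G
    let Ψ : ((i : Fin r) → (Fin 1 → MattareiWrap (Nat.card (K i)))) ≃* ((i : Fin r) → (K i)) :=
      MulEquiv.piCongrRight fun i =>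
        (MulEquiv.piUnique fun _ : Fin 1 => MattareiWrap (Nat.card (K i))).trans (me i)
    refine ⟨(Subgroup.noncommPiCoprod hcomm).comp Ψ.toMonoidHom, ?_⟩
    have hcomp : Function.Injective
        (⇑(Subgroup.noncommPiCoprod hcomm) ∘ ⇑Ψ) :=
      Function.Injective.comp
        (Subgroup.injective_noncommPiCoprod_of_iSupIndep hind) Ψ.injective
    exact hcomp
  · -- the embedding of G into the automorphism group
    let Ψ : ((i : Fin r) → (Fin 1 → MattareiWrap (Nat.card (K i)))) ≃* ((i : Fin r) → (K i)) :=
      MulEquiv.piCongrRight fun i =>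
        (MulEquiv.piUnique fun _ : Fin 1 => MattareiWrap (Nat.card (K i))).trans (me i)
    have hinj : Function.Injective (Subgroup.noncommPiCoprod hcomm) :=
      Subgroup.injective_noncommPiCoprod_of_iSupIndep hind
    let Φ : ((i : Fin r) → (Fin 1 → MattareiWrap (Nat.card (K i)))) ≃* (⨆ i, K i : Subgroup G) :=
      Ψ.trans ((MonoidHom.ofInjective hinj).trans
        (MulEquiv.subgroupCongr Subgroup.noncommPiCoprod_range))
    have hconjinj : Function.Injective (MulAut.conjNormal (H := ⨆ i, K i) : G →* _) := by
      rw [injective_iff_map_eq_one]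
      intro g hg
      have hcent : g ∈ Subgroup.centralizer ((⨆ i, K i : Subgroup G) : Set G) := by
        rw [Subgroup.mem_centralizer_iff]
        intro s hs
        have h1 : (MulAut.conjNormal g ⟨s, hs⟩ : G) = g * s * g⁻¹ :=
          MulAut.conjNormal_apply g ⟨s, hs⟩
        rw [hg] at h1
        have h2 : ((1 : MulAut (⨆ i, K i : Subgroup G)) ⟨s, hs⟩ : G) = s := rfl
        rw [h2] at h1
        have e1 : s * g = (g * s * g⁻¹) * g := by rw [← h1]
        rw [e1]; group
      rw [hC, Subgroup.mem_bot] at hcent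
      exact hcent
    refine ⟨(MulAut.congr Φ.symm).toMonoidHom.comp MulAut.conjNormal, ?_⟩
    have hcomp : Function.Injective
        (⇑(MulAut.congr Φ.symm) ∘ ⇑(MulAut.conjNormal (H := ⨆ i, K i) : G →* _)) :=
      Function.Injective.comp (MulAut.congr Φ.symm).injective hconjinj
    exact hcomp
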